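/- The probability under bias p that a random Boolean function of n variables is positively canalizing and nonconstant satisfies the inclusion-exclusion formula: Pr_p(PC⁻) = Σ_{k=1}^{n} (−1)^{k+1} · C(n,k) · 2^k · (p^{2^n − 2^{n−k}} − p^{2^n}). -/

import Mathlib

open scoped Classical
open Finset

noncomputable def prBias {n : ℕ} (p : ℝ) (f : (Fin n → Bool) → Bool) : ℝ :=
  p ^ (Finset.univ.filter (fun x : Fin n → Bool => f x = true)).card *
  (1 - p) ^ (Finset.univ.filter (fun x : Fin n → Bool => f x = false)).card

lemma sum_prod_swap {α β M : Type*} [Fintype α] [Fintype β] [DecidableEq α] [CommSemiring M]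
    (w : α → β → M) :
    ∑ f : α → β, ∏ x : α, w x (f x) = ∏ x : α, ∑ b : β, w x b := by
  rw [Finset.prod_univ_sum, Fintype.piFinset_univ]

lemma prBias_eq {n : ℕ} (p : ℝ) (f : (Fin n → Bool) → Bool) :
    prBias p f = ∏ x : Fin n → Bool, (if f x = true then p else 1 - p) := by
  rw [Finset.prod_ite, Finset.prod_const, Finset.prod_const, prBias]
  have : (Finset.univ.filter (fun x : Fin n → Bool => f x = false))
      = Finset.univ.filter (fun x => ¬ f x = true) := by
    ext x; simp
  rw [this]

lemma sum_constrained {n : ℕ} (p : ℝ) (F : Finset (Fin n → Bool)) :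
    ∑ f : (Fin n → Bool) → Bool,
      (if ∀ x ∈ F, f x = true then prBias p f else 0) = p ^ F.card := by
  have key : ∀ f : (Fin n → Bool) → Bool,
      (if ∀ x ∈ F, f x = true then prBias p f else 0)
      = ∏ x : Fin n → Bool, (if f x = true then p else if x ∈ F then 0 else 1 - p) := by
    intro f
    by_cases hf : ∀ x ∈ F, f x = true
    · rw [if_pos hf, prBias_eq]
      apply Finset.prod_congr rfl
      intro x _
      by_cases hx : f x = true
      · simp [hx]
      · have : x ∉ F := fun hm => hx (hf x hm)
        simp [hx, this]
    · rw [if_neg hf]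
      push_neg at hf
      obtain ⟨x0, hx0, hfx0⟩ := hf
      symm
      apply Finset.prod_eq_zero (Finset.mem_univ x0)
      simp [hfx0, hx0]
  simp only [key]
  rw [sum_prod_swap (fun x b => if b = true then p else if x ∈ F then 0 else 1 - p)]
  have : ∀ x : Fin n → Bool,
      (∑ b : Bool, if b = true then p else if x ∈ F then 0 else 1 - p)
      = if x ∈ F then p else 1 := by
    intro x
    rw [Fintype.sum_bool]
    by_cases hx : x ∈ F <;> simp [hx]
  simp only [this]
  rw [Finset.prod_ite_mem, Finset.univ_inter, Finset.prod_const]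

lemma card_compl_Fh {n : ℕ} (h : Fin n → Option Bool) :
    (Finset.univ.filter (fun x : Fin n → Bool => ∀ i, h i ≠ some (x i))).card
      = 2 ^ (n - (Finset.univ.filter (fun i => h i ≠ none)).card) := by
  rw [Finset.card_filter]
  have key : ∀ x : Fin n → Bool, (if ∀ i, h i ≠ some (x i) then (1:ℕ) else 0)
      = ∏ i : Fin n, (if h i ≠ some (x i) then (1:ℕ) else 0) := by
    intro x
    rw [Finset.prod_boole]
    congr 1
    simp
  simp only [key]
  rw [sum_prod_swap (fun i b => if h i ≠ some b then (1:ℕ) else 0)]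
  have fac : ∀ i : Fin n, (∑ b : Bool, if h i ≠ some b then (1:ℕ) else 0)
      = if h i = none then 2 else 1 := by
    intro i
    rw [Fintype.sum_bool]
    cases hh : h i with
    | none => simp
    | some c => cases c <;> simp
  simp only [fac]
  rw [Finset.prod_ite, Finset.prod_const, Finset.prod_const, one_pow, mul_one]
  congr 1
  have := Finset.card_filter_add_card_filter_not
    (s := (Finset.univ : Finset (Fin n))) (p := fun i => h i = none)
  simp only [Finset.card_univ, Fintype.card_fin] at this
  have h2 : (Finset.univ.filter (fun i => ¬ h i = none)).card
      = (Finset.univ.filter (fun i => h i ≠ none)).card := rfl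
  omega

lemma card_fiber {n : ℕ} (D : Finset (Fin n)) :
    (Finset.univ.filter (fun h : Fin n → Option Bool =>
        Finset.univ.filter (fun i => h i ≠ none) = D)).card = 2 ^ D.card := by
  rw [Finset.card_filter]
  have key : ∀ h : Fin n → Option Bool,
      (if Finset.univ.filter (fun i => h i ≠ none) = D then (1:ℕ) else 0)
      = ∏ i : Fin n, (if ((h i ≠ none) ↔ i ∈ D) then (1:ℕ) else 0) := by
    intro h
    rw [Finset.prod_boole]
    congr 1
    apply propext
    constructor
    · intro he i _
      rw [← he]; simp
    · intro hi
      ext i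
      simp only [Finset.mem_filter, Finset.mem_univ, true_and]
      exact hi i (Finset.mem_univ i)
  simp only [key]
  rw [sum_prod_swap (fun i (c : Option Bool) => if ((c ≠ none) ↔ i ∈ D) then (1:ℕ) else 0)]
  have fac : ∀ i : Fin n, (∑ c : Option Bool, if ((c ≠ none) ↔ i ∈ D) then (1:ℕ) else 0)
      = if i ∈ D then 2 else 1 := by
    intro i
    rw [Fintype.sum_option, Fintype.sum_bool]
    by_cases hi : i ∈ D <;> simp [hi]
  simp only [fac]
  rw [Finset.prod_ite_mem, Finset.univ_inter, Finset.prod_const]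

noncomputable def chi {n : ℕ} (f : (Fin n → Bool) → Bool) (i : Fin n) (b : Bool) : ℝ :=
  if ∀ x : Fin n → Bool, x i = b → f x = true then 1 else 0

noncomputable def wgt {n : ℕ} (f : (Fin n → Bool) → Bool) (i : Fin n) : Option Bool → ℝ
  | none => 1
  | some b => -(chi f i b)

lemma E_expand {n : ℕ} (f : (Fin n → Bool) → Bool) :
    ∑ h : Fin n → Option Bool, ∏ i : Fin n, wgt f i (h i)
      = ∏ i : Fin n, (1 - chi f i false - chi f i true) := by
  rw [sum_prod_swap (fun i c => wgt f i c)]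
  apply Finset.prod_congr rfl
  intro i _
  rw [Fintype.sum_option, Fintype.sum_bool]
  show 1 + (-(chi f i true) + -(chi f i false)) = _
  ring

lemma prod_factor_const {n : ℕ} :
    ∏ i : Fin n, (1 - chi (fun _ => true) i false - chi (fun _ => true) i true)
      = (-1 : ℝ) ^ n := by
  have : ∀ i : Fin n, ∀ b, chi (fun _ => true) i b = 1 := by
    intro i b; rw [chi, if_pos]; intro x _; rfl
  simp only [this]
  norm_num

lemma prod_factor_ne {n : ℕ} (f : (Fin n → Bool) → Bool) (hf : f ≠ fun _ => true) :
    ∏ i : Fin n, (1 - chi f i false - chi f i true)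
      = if ∃ (i : Fin n) (s : Bool), ∀ x : Fin n → Bool, x i = s → f x = true
        then 0 else 1 := by
  have notboth : ∀ i : Fin n, ¬ (chi f i false = 1 ∧ chi f i true = 1) := by
    intro i ⟨h0, h1⟩
    apply hf
    funext x
    rw [chi] at h0 h1
    split_ifs at h0 with hc0
    · split_ifs at h1 with hc1
      · cases hx : x i
        · exact hc0 x hx
        · exact hc1 x hx
      · norm_num at h1
    · norm_num at h0
  have chival : ∀ i b, chi f i b = 0 ∨ chi f i b = 1 := by
    intro i b; rw [chi]; split_ifs <;> simp
  by_cases hex : ∃ (i : Fin n) (s : Bool), ∀ x : Fin n → Bool, x i = s → f x = true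
  · rw [if_pos hex]
    obtain ⟨i0, s0, hs0⟩ := hex
    apply Finset.prod_eq_zero (Finset.mem_univ i0)
    have h1 : chi f i0 s0 = 1 := by rw [chi, if_pos hs0]
    cases s0 with
    | false =>
      have h2 : chi f i0 true = 0 := by
        rcases chival i0 true with h | h
        · exact h
        · exact absurd ⟨h1, h⟩ (notboth i0)
      rw [h1, h2]; ring
    | true =>
      have h2 : chi f i0 false = 0 := by
        rcases chival i0 false with h | h
        · exact h
        · exact absurd ⟨h, h1⟩ (notboth i0)
      rw [h1, h2]; ring
  · rw [if_neg hex]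
    apply Finset.prod_eq_one
    intro i _
    push_neg at hex
    have h0 : chi f i false = 0 := by
      rcases chival i false with h | h
      · exact h
      · exfalso
        rw [chi] at h; split_ifs at h with hc
        · obtain ⟨x, hx, hfx⟩ := hex i false
          exact hfx (hc x hx)
        · norm_num at h
    have h1 : chi f i true = 0 := by
      rcases chival i true with h | h
      · exact h
      · exfalso
        rw [chi] at h; split_ifs at h with hc
        · obtain ⟨x, hx, hfx⟩ := hex i true
          exact hfx (hc x hx)
        · norm_num at h
    rw [h0, h1]; ring

lemma prod_wgt {n : ℕ} (f : (Fin n → Bool) → Bool) (h : Fin n → Option Bool) :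
    ∏ i : Fin n, wgt f i (h i)
      = (-1:ℝ) ^ (Finset.univ.filter (fun i => h i ≠ none)).card *
        (if ∀ x ∈ Finset.univ.filter
            (fun x : Fin n → Bool => ∃ i, h i = some (x i)), f x = true
         then 1 else 0) := by
  have point : ∀ i, wgt f i (h i) = (if h i ≠ none then (-1:ℝ) else 1) *
      (if ∀ x : Fin n → Bool, h i = some (x i) → f x = true then 1 else 0) := by
    intro i
    cases hh : h i with
    | none =>
      rw [wgt]
      have : (∀ x : Fin n → Bool, (none : Option Bool) = some (x i) → f x = true) := by
        intro x hx; exact absurd hx (by simp)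
      simp [this]
    | some b =>
      rw [wgt, chi]
      have heq : (∀ x : Fin n → Bool, some b = some (x i) → f x = true)
          ↔ (∀ x : Fin n → Bool, x i = b → f x = true) := by
        constructor
        · intro H x hx; exact H x (by rw [hx])
        · intro H x hx; exact H x (by injection hx with h'; exact h'.symm)
      rw [if_congr heq rfl rfl]
      split_ifs <;> simp_all
  simp only [point]
  rw [Finset.prod_mul_distrib]
  congr 1
  · rw [Finset.prod_ite, Finset.prod_const, Finset.prod_const, one_pow, mul_one]
  · by_cases H : ∀ x ∈ Finset.univ.filter
        (fun x : Fin n → Bool => ∃ i, h i = some (x i)), f x = true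
    · rw [if_pos H]
      apply Finset.prod_eq_one
      intro i _
      rw [if_pos]
      intro x hix
      exact H x (Finset.mem_filter.mpr ⟨Finset.mem_univ x, ⟨i, hix⟩⟩)
    · rw [if_neg H]
      push_neg at H
      obtain ⟨x, hx, hfx⟩ := H
      rw [Finset.mem_filter] at hx
      obtain ⟨-, i, hi⟩ := hx
      apply Finset.prod_eq_zero (Finset.mem_univ i)
      rw [if_neg]
      intro hall
      exact hfx (hall x hi)

lemma card_Fh {n : ℕ} (h : Fin n → Option Bool) :
    (Finset.univ.filter (fun x : Fin n → Bool => ∃ i, h i = some (x i))).card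
      = 2 ^ n - 2 ^ (n - (Finset.univ.filter (fun i => h i ≠ none)).card) := by
  have hc := card_compl_Fh h
  have hsplit := Finset.card_filter_add_card_filter_not
    (s := (Finset.univ : Finset (Fin n → Bool)))
    (p := fun x => ∃ i, h i = some (x i))
  have huniv : (Finset.univ : Finset (Fin n → Bool)).card = 2 ^ n := by
    simp [Finset.card_univ]
  have hfe : (Finset.univ.filter (fun x : Fin n → Bool => ¬ ∃ i, h i = some (x i))).card
      = 2 ^ (n - (Finset.univ.filter (fun i => h i ≠ none)).card) := by
    rw [← hc]
    congr 1
    ext x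
    simp [not_exists]
  have key : (Finset.univ.filter (fun x : Fin n → Bool => ∃ i, h i = some (x i))).card
      + 2 ^ (n - (Finset.univ.filter (fun i => h i ≠ none)).card) = 2 ^ n := by
    rw [← hfe, ← huniv]
    exact hsplit
  exact Nat.eq_sub_of_add_eq key

lemma sum_wgt {n : ℕ} (p : ℝ) (h : Fin n → Option Bool) :
    ∑ f : (Fin n → Bool) → Bool, (∏ i : Fin n, wgt f i (h i)) * prBias p f
      = (-1:ℝ) ^ (Finset.univ.filter (fun i => h i ≠ none)).card *
        p ^ (2 ^ n - 2 ^ (n - (Finset.univ.filter (fun i => h i ≠ none)).card)) := by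
  simp only [prod_wgt]
  rw [← card_Fh h, ← sum_constrained p
    (Finset.univ.filter (fun x : Fin n → Bool => ∃ i, h i = some (x i))), Finset.mul_sum]
  apply Finset.sum_congr rfl
  intro f _
  by_cases hf : ∀ x ∈ Finset.univ.filter
      (fun x : Fin n → Bool => ∃ i, h i = some (x i)), f x = true
  · rw [if_pos hf, if_pos hf]; ring
  · rw [if_neg hf, if_neg hf]; ring

lemma Msum {n : ℕ} (p : ℝ) :
    ∑ h : Fin n → Option Bool,
      ((-1:ℝ) ^ (Finset.univ.filter (fun i => h i ≠ none)).card *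
        p ^ (2 ^ n - 2 ^ (n - (Finset.univ.filter (fun i => h i ≠ none)).card)))
    = ∑ k ∈ Finset.range (n+1), (n.choose k : ℝ) * 2 ^ k *
        ((-1:ℝ) ^ k * p ^ (2 ^ n - 2 ^ (n - k))) := by
  rw [← Finset.sum_fiberwise_of_maps_to (g := fun h : Fin n → Option Bool =>
      Finset.univ.filter (fun i => h i ≠ none)) (t := Finset.univ.powerset)
      (fun h _ => Finset.mem_powerset.mpr (Finset.subset_univ _))]
  have inner : ∀ D ∈ (Finset.univ : Finset (Fin n)).powerset,
      (∑ h ∈ Finset.univ.filter (fun h : Fin n → Option Bool =>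
          Finset.univ.filter (fun i => h i ≠ none) = D),
        ((-1:ℝ) ^ (Finset.univ.filter (fun i => h i ≠ none)).card *
          p ^ (2 ^ n - 2 ^ (n - (Finset.univ.filter (fun i => h i ≠ none)).card))))
      = (2:ℝ) ^ D.card * ((-1:ℝ) ^ D.card * p ^ (2 ^ n - 2 ^ (n - D.card))) := by
    intro D _
    rw [Finset.sum_congr rfl (fun h hh => by rw [(Finset.mem_filter.mp hh).2])]
    rw [Finset.sum_const, card_fiber, nsmul_eq_mul]
    push_cast
    ring
  rw [Finset.sum_congr rfl inner]
  rw [Finset.sum_powerset]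
  have huc : (Finset.univ : Finset (Fin n)).card = n := by simp
  rw [huc]
  apply Finset.sum_congr rfl
  intro k _
  have inner2 : ∀ D ∈ Finset.powersetCard k (Finset.univ : Finset (Fin n)),
      (2:ℝ) ^ D.card * ((-1:ℝ) ^ D.card * p ^ (2 ^ n - 2 ^ (n - D.card)))
      = (2:ℝ) ^ k * ((-1:ℝ) ^ k * p ^ (2 ^ n - 2 ^ (n - k))) := by
    intro D hD
    rw [(Finset.mem_powersetCard.mp hD).2]
  rw [Finset.sum_congr rfl inner2, Finset.sum_const, Finset.card_powersetCard, huc,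
    nsmul_eq_mul]
  push_cast
  ring

theorem prob_pos_canalizing (n : ℕ) (hn : 1 ≤ n) (p : ℝ) (hp0 : 0 ≤ p) (hp1 : p ≤ 1) :
    (∑ f : (Fin n → Bool) → Bool,
      if f ≠ (fun _ => true) ∧
         ∃ (i : Fin n) (s : Bool), ∀ x : Fin n → Bool, x i = s → f x = true
       then prBias p f else 0) =
    ∑ k ∈ Finset.Icc 1 n,
      (-1 : ℝ) ^ (k + 1) * (n.choose k) * 2 ^ k *
        (p ^ (2 ^ n - 2 ^ (n - k)) - p ^ 2 ^ n) := by
  have hPr1 : prBias p (fun _ : Fin n → Bool => true) = p ^ 2 ^ n := by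
    have e1 : (Finset.univ.filter (fun x : Fin n → Bool => ((fun _ => true) x : Bool) = true))
        = Finset.univ := Finset.filter_true_of_mem (by intro x _; rfl)
    have e2 : (Finset.univ.filter (fun x : Fin n → Bool => ((fun _ => true) x : Bool) = false))
        = ∅ := Finset.filter_false_of_mem (by intro x _; simp)
    rw [prBias, e1, e2]
    simp [Finset.card_univ]
  have htotal : ∑ f : (Fin n → Bool) → Bool, prBias p f = 1 := by
    have := sum_constrained p (∅ : Finset (Fin n → Bool))
    simpa using this
  have point : ∀ f : (Fin n → Bool) → Bool,
      (if f ≠ (fun _ => true) ∧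
          ∃ (i : Fin n) (s : Bool), ∀ x : Fin n → Bool, x i = s → f x = true
        then prBias p f else 0)
      = (1 - ∏ i : Fin n, (1 - chi f i false - chi f i true)) * prBias p f
        - (if f = (fun _ => true) then (1 - (-1:ℝ)^n) * p ^ 2 ^ n else 0) := by
    intro f
    by_cases hf : f = (fun _ => true)
    · subst hf
      rw [if_neg (by simp), if_pos rfl, prod_factor_const, hPr1]
      ring
    · rw [prod_factor_ne f hf, if_neg hf]
      by_cases hex : ∃ (i : Fin n) (s : Bool), ∀ x : Fin n → Bool, x i = s → f x = true
      · rw [if_pos ⟨hf, hex⟩, if_pos hex]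
        ring
      · rw [if_neg (fun hc => hex hc.2), if_neg hex]
        ring
  rw [Finset.sum_congr rfl (fun f _ => point f), Finset.sum_sub_distrib]
  have hsingle : (∑ f : (Fin n → Bool) → Bool,
      if f = (fun _ => true) then (1 - (-1:ℝ)^n) * p ^ 2 ^ n else 0)
      = (1 - (-1:ℝ)^n) * p ^ 2 ^ n := by
    rw [Finset.sum_ite_eq' Finset.univ (fun _ => true) (fun _ => (1 - (-1:ℝ)^n) * p ^ 2 ^ n)]
    exact if_pos (Finset.mem_univ _)
  rw [hsingle]
  have hmain : (∑ f : (Fin n → Bool) → Bool,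
      (1 - ∏ i : Fin n, (1 - chi f i false - chi f i true)) * prBias p f)
      = 1 - ∑ k ∈ Finset.range (n+1), (n.choose k : ℝ) * 2 ^ k *
          ((-1:ℝ) ^ k * p ^ (2 ^ n - 2 ^ (n - k))) := by
    simp only [sub_mul, one_mul]
    rw [Finset.sum_sub_distrib, htotal]
    have swap1 : ∀ f : (Fin n → Bool) → Bool,
        (∏ i : Fin n, (1 - chi f i false - chi f i true)) * prBias p f
        = ∑ h : Fin n → Option Bool, (∏ i : Fin n, wgt f i (h i)) * prBias p f := by
      intro f
      rw [← E_expand f, Finset.sum_mul]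
    have hx : ∑ f : (Fin n → Bool) → Bool,
        (∏ i : Fin n, (1 - chi f i false - chi f i true)) * prBias p f
        = ∑ k ∈ Finset.range (n+1), (n.choose k : ℝ) * 2 ^ k *
          ((-1:ℝ) ^ k * p ^ (2 ^ n - 2 ^ (n - k))) := by
      rw [Finset.sum_congr rfl (fun f _ => swap1 f), Finset.sum_comm,
        Finset.sum_congr rfl (fun h _ => sum_wgt p h), Msum p]
    rw [hx]
  rw [hmain]
  have hins : Finset.range (n+1) = insert 0 (Finset.Icc 1 n) := by
    ext k; simp; omega
  rw [hins, Finset.sum_insert (by simp)]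
  have h0term : ((n.choose 0 : ℝ) * 2 ^ 0 * ((-1:ℝ) ^ 0 * p ^ (2 ^ n - 2 ^ (n - 0)))) = 1 := by
    simp
  rw [h0term]
  have hbin : ∑ k ∈ Finset.Icc 1 n, (-1:ℝ)^(k+1) * (n.choose k : ℝ) * 2^k
      = 1 - (-1:ℝ)^n := by
    have h0 := add_pow (-2 : ℝ) 1 n
    simp only [one_pow, mul_one] at h0
    have h1 : ((-2:ℝ) + 1) ^ n = (-1:ℝ)^n := by norm_num
    rw [h1, hins, Finset.sum_insert (by simp)] at h0
    simp only [pow_zero, Nat.choose_zero_right, Nat.cast_one, one_mul] at h0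
    have h2 : ∑ k ∈ Finset.Icc 1 n, (-1:ℝ)^(k+1) * (n.choose k : ℝ) * 2^k
        = -∑ k ∈ Finset.Icc 1 n, (-2:ℝ)^k * (n.choose k : ℝ) := by
      rw [← Finset.sum_neg_distrib]
      apply Finset.sum_congr rfl
      intro k _
      have : (-2:ℝ)^k = (-1:ℝ)^k * 2^k := by
        rw [neg_pow]
      rw [this, pow_succ]
      ring
    rw [h2]
    have h3 : ∑ k ∈ Finset.Icc 1 n, (-2:ℝ)^k * (n.choose k : ℝ) = (-1:ℝ)^n - 1 := by
      linarith [h0]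
    rw [h3]
    ring
  have hrhs : ∑ k ∈ Finset.Icc 1 n,
      (-1 : ℝ) ^ (k + 1) * (n.choose k : ℝ) * 2 ^ k *
        (p ^ (2 ^ n - 2 ^ (n - k)) - p ^ 2 ^ n)
      = (∑ k ∈ Finset.Icc 1 n,
          (-1 : ℝ) ^ (k + 1) * (n.choose k : ℝ) * 2 ^ k * p ^ (2 ^ n - 2 ^ (n - k)))
        - (1 - (-1:ℝ)^n) * p ^ 2 ^ n := by
    simp only [mul_sub]
    rw [Finset.sum_sub_distrib, ← Finset.sum_mul, hbin]
  rw [hrhs]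
  have hA : ∑ k ∈ Finset.Icc 1 n,
      (-1 : ℝ) ^ (k + 1) * (n.choose k : ℝ) * 2 ^ k * p ^ (2 ^ n - 2 ^ (n - k))
      = -∑ k ∈ Finset.Icc 1 n, (n.choose k : ℝ) * 2 ^ k *
          ((-1:ℝ) ^ k * p ^ (2 ^ n - 2 ^ (n - k))) := by
    rw [← Finset.sum_neg_distrib]
    apply Finset.sum_congr rfl
    intro k _
    rw [pow_succ]
    ring
  rw [hA]
  ring
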